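/- Let 0 < r < 1. If Y is a closed subset of ℂ \ {0}, then the image κ(Y) under the map κ(z) = (z/√(1+r²), r·z⁻¹/√(1+r²)) is a closed subset of ℂ². -/

import Mathlib

/-- If `Y` is a closed subset of `ℂ \ {0}` (i.e. `Y = C ∩ (ℂ \ {0})` for some closed `C`),
then the image `κ(Y)` is closed in `ℂ²`, where `κ(z) = (z/√(1+r²), r·z⁻¹/√(1+r²))`. -/
theorem stmt3 (r : ℝ) (hr0 : 0 < r) (hr1 : r < 1) (Y : Set ℂ)
    (hY : ∃ C : Set ℂ, IsClosed C ∧ Y = C ∩ {z : ℂ | z ≠ 0}) :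
    IsClosed ((fun z : ℂ => (z / (Real.sqrt (1 + r ^ 2) : ℂ),
        (r : ℂ) * z⁻¹ / (Real.sqrt (1 + r ^ 2) : ℂ))) '' Y) := by
  obtain ⟨C, hC, rfl⟩ := hY
  set s : ℝ := Real.sqrt (1 + r ^ 2) with hs
  have hspos : 0 < s := Real.sqrt_pos.mpr (by positivity)
  have hsne : (s : ℂ) ≠ 0 := by exact_mod_cast hspos.ne'
  have hrne : (r : ℂ) ≠ 0 := by exact_mod_cast hr0.ne'
  have hkey : (fun z : ℂ => (z / (s : ℂ), (r : ℂ) * z⁻¹ / (s : ℂ))) '' (C ∩ {z : ℂ | z ≠ 0})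
      = {p : ℂ × ℂ | p.1 * p.2 = (r : ℂ) / (s : ℂ) ^ 2} ∩ {p : ℂ × ℂ | (s : ℂ) * p.1 ∈ C} := by
    ext p
    constructor
    · rintro ⟨z, ⟨hzC, hz0⟩, rfl⟩
      have hz : z ≠ 0 := hz0
      refine ⟨?_, ?_⟩
      · show z / (s:ℂ) * ((r:ℂ) * z⁻¹ / (s:ℂ)) = (r:ℂ) / (s:ℂ)^2
        field_simp
      · show (s:ℂ) * (z / (s:ℂ)) ∈ C
        rwa [mul_div_cancel₀ _ hsne]
    · rintro ⟨h1, h2⟩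
      simp only [Set.mem_setOf_eq] at h1 h2
      have hp1 : p.1 ≠ 0 := by
        intro h
        rw [h, zero_mul] at h1
        rcases (div_eq_zero_iff.mp h1.symm) with h' | h'
        · exact hrne h'
        · exact hsne (pow_eq_zero_iff (n := 2) (by norm_num) |>.mp h')
      refine ⟨(s : ℂ) * p.1, ⟨h2, by simp [hsne, hp1]⟩, ?_⟩
      have hp2 : p.2 = (r : ℂ) / (s : ℂ) ^ 2 / p.1 := by
        rw [eq_div_iff hp1, mul_comm]
        exact h1
      rw [Prod.ext_iff]
      constructor
      · show (s:ℂ) * p.1 / (s:ℂ) = p.1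
        field_simp
      · show (r:ℂ) * ((s:ℂ) * p.1)⁻¹ / (s:ℂ) = p.2
        rw [hp2]
        field_simp
  rw [hkey]
  exact ((isClosed_singleton.preimage (by continuity : Continuous fun p : ℂ × ℂ => p.1 * p.2))).inter
    (hC.preimage (by continuity))
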